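/- Setup: let s ≥ 1 be an integer, let G be a finite simple graph on 8s vertices satisfying the planar bipartite edge bound, let x be a vertex of G, and let V_1, …, V_8 be an almost equitable coloring of G − x with small class V_1, auxiliary digraph H, accessible classes A and non-accessible classes B, chosen so that no almost equitable coloring of G − x has more accessible classes. Suppose A = {V_1, V_2, V_3} (so there are exactly 3 accessible classes) and both V_2 and V_3 are terminal. Then for each j ∈ {2, 3}, every vertex v ∈ V_j that has a solo neighbor in some class of B has a neighbor in V_1 and a neighbor in V_{5−j}. (This is Lemma 4.3 of the paper.) -/

import Mathlib

open scoped Classical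

namespace Equitable

variable {V : Type*}

/-- An equitable `r`-coloring of `G`: a proper coloring with `r` colors whose
color classes pairwise differ in size by at most `1`. -/
def IsEquitableColoring [Fintype V] (G : SimpleGraph V) (r : ℕ) (c : V → Fin r) : Prop :=
  (∀ u v : V, G.Adj u v → c u ≠ c v) ∧
  ∀ i j : Fin r,
    (Finset.univ.filter fun v => c v = i).card ≤
      (Finset.univ.filter fun v => c v = j).card + 1

/-- The number of edges of `G` with both endpoints in `S`. -/
noncomputable def edgesWithin [Fintype V] (G : SimpleGraph V) (S : Finset V) : ℕ :=
  (G.edgeFinset.filter fun e => ∀ v ∈ e, v ∈ S).card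

/-- The number of edges of `G` with one endpoint in `X` and the other in `Y`. -/
noncomputable def edgesBetween [Fintype V] (G : SimpleGraph V) (X Y : Finset V) : ℕ :=
  (G.edgeFinset.filter fun e => ∃ u ∈ X, ∃ w ∈ Y, e = s(u, w)).card

/-- The semi-planar edge bounds. -/
def SemiPlanarBounds [Fintype V] (G : SimpleGraph V) : Prop :=
  (∀ S : Finset V, edgesWithin G S ≤ 3 * S.card) ∧
  ∀ X Y : Finset V, Disjoint X Y → edgesBetween G X Y ≤ 2 * (X.card + Y.card)

/-- The planar edge bounds. -/
def PlanarBounds [Fintype V] (G : SimpleGraph V) : Prop :=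
  (∀ S : Finset V, 3 ≤ S.card → edgesWithin G S ≤ 3 * S.card - 6) ∧
  ∀ X Y : Finset V, Disjoint X Y → 3 ≤ X.card + Y.card →
    edgesBetween G X Y ≤ 2 * (X.card + Y.card) - 4

/-- The semi-planar bipartite edge bound. -/
def SemiPlanarBipBound [Fintype V] (G : SimpleGraph V) : Prop :=
  ∀ X Y : Finset V, Disjoint X Y → edgesBetween G X Y ≤ 2 * (X.card + Y.card)

/-- The planar bipartite edge bound. -/
def PlanarBipBound [Fintype V] (G : SimpleGraph V) : Prop :=
  ∀ X Y : Finset V, Disjoint X Y → 3 ≤ X.card + Y.card →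
    edgesBetween G X Y ≤ 2 * (X.card + Y.card) - 4

/-- `P` is an almost equitable coloring of `G − x`: a partition of `V(G) \ {x}` into `r`
independent sets, the small class `P 0` of size `s − 1` and the other classes of size `s`. -/
def AEColoring [Fintype V] (G : SimpleGraph V) (x : V) {r : ℕ} [NeZero r] (s : ℕ)
    (P : Fin r → Finset V) : Prop :=
  (∀ i j : Fin r, i ≠ j → Disjoint (P i) (P j)) ∧
  (∀ v : V, (∃ i, v ∈ P i) ↔ v ≠ x) ∧
  (∀ i : Fin r, ∀ u ∈ P i, ∀ w ∈ P i, ¬ G.Adj u w) ∧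
  (P 0).card = s - 1 ∧
  ∀ i : Fin r, i ≠ 0 → (P i).card = s

/-- The arc relation of the auxiliary digraph `H`: an arc from class `i` to class `j`
iff `i ≠ j` and some vertex of `P i` has no `G`-neighbor in `P j` (such a vertex
is a witness of the arc and is called movable to `P j`). -/
def Arc (G : SimpleGraph V) {r : ℕ} (P : Fin r → Finset V) (i j : Fin r) : Prop :=
  i ≠ j ∧ ∃ v ∈ P i, ∀ u ∈ P j, ¬ G.Adj v u

/-- A class is accessible if the auxiliary digraph has a directed path (possibly of
length `0`) from it to the small class `P 0`. -/
def Accessible (G : SimpleGraph V) {r : ℕ} [NeZero r] (P : Fin r → Finset V)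
    (i : Fin r) : Prop :=
  Relation.ReflTransGen (Arc G P) i 0

/-- The number of accessible classes. -/
noncomputable def accCount (G : SimpleGraph V) {r : ℕ} [NeZero r]
    (P : Fin r → Finset V) : ℕ :=
  (Finset.univ.filter fun i => Accessible G P i).card

/-- No almost equitable coloring of `G − x` has more accessible classes than `P`. -/
def MaxAccessible [Fintype V] (G : SimpleGraph V) (x : V) {r : ℕ} [NeZero r] (s : ℕ)
    (P : Fin r → Finset V) : Prop :=
  ∀ P' : Fin r → Finset V, AEColoring G x s P' → accCount G P' ≤ accCount G P

/-- Class `i` blocks class `j` if `i ≠ j` and the auxiliary digraph minus the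
class `i` has no directed path from `j` to the small class `P 0`. -/
def Blocks (G : SimpleGraph V) {r : ℕ} [NeZero r] (P : Fin r → Finset V)
    (i j : Fin r) : Prop :=
  i ≠ j ∧ ¬ Relation.ReflTransGen (fun p q => Arc G P p q ∧ p ≠ i ∧ q ≠ i) j 0

/-- An accessible class is terminal if it blocks no accessible class. -/
def Terminal (G : SimpleGraph V) {r : ℕ} [NeZero r] (P : Fin r → Finset V)
    (i : Fin r) : Prop :=
  Accessible G P i ∧ ∀ j : Fin r, Accessible G P j → ¬ Blocks G P i j

/-- `u` is a solo neighbor of `v` (where `v` lies in the accessible class `P i`):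
`u` lies in a non-accessible class, is adjacent to `v`, and `v` is the unique
neighbor of `u` in `P i`.  `Q(v)` is the set of such `u`. -/
def SoloNbr (G : SimpleGraph V) {r : ℕ} [NeZero r] (P : Fin r → Finset V)
    (i : Fin r) (v u : V) : Prop :=
  (∃ k : Fin r, ¬ Accessible G P k ∧ u ∈ P k) ∧ G.Adj v u ∧
    ∀ w ∈ P i, G.Adj u w → w = v

/-- `u ∈ Q'(v)`: `u` is a solo neighbor of `v` that is non-adjacent to some other
solo neighbor of `v`. -/
def InQ' (G : SimpleGraph V) {r : ℕ} [NeZero r] (P : Fin r → Finset V)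
    (i : Fin r) (v u : V) : Prop :=
  SoloNbr G P i v u ∧ ∃ u' : V, SoloNbr G P i v u' ∧ u' ≠ u ∧ ¬ G.Adj u u'

/-- A vertex `v` of a terminal accessible class `P i` is ordinary if some other vertex of
`P i` is movable to another accessible class, or there are at most two accessible classes. -/
def Ordinary (G : SimpleGraph V) {r : ℕ} [NeZero r] (P : Fin r → Finset V)
    (i : Fin r) (v : V) : Prop :=
  (∃ v' ∈ P i, v' ≠ v ∧
    ∃ j : Fin r, j ≠ i ∧ Accessible G P j ∧ ∀ w ∈ P j, ¬ G.Adj v' w) ∨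
  accCount G P ≤ 2

/-- The strong component of the auxiliary digraph containing class `i`. -/
noncomputable def strongComp (G : SimpleGraph V) {r : ℕ} (P : Fin r → Finset V)
    (i : Fin r) : Finset (Fin r) :=
  Finset.univ.filter fun j =>
    Relation.ReflTransGen (Arc G P) i j ∧ Relation.ReflTransGen (Arc G P) j i



section Aux

variable [Fintype V] {G : SimpleGraph V} {x : V} {s : ℕ} {P : Fin 8 → Finset V}

lemma accessible_of_arc {i j : Fin 8} (h : Arc G P i j) (hj : Accessible G P j) :
    Accessible G P i :=
  Relation.ReflTransGen.head h hj

lemma nbr_of_not_accessible {m j : Fin 8} (hm : ¬ Accessible G P m)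
    (hj : Accessible G P j) : ∀ y ∈ P m, ∃ z ∈ P j, G.Adj y z := by
  intro y hy
  by_contra hcon
  push_neg at hcon
  have hmj : m ≠ j := by rintro rfl; exact hm hj
  exact hm (accessible_of_arc ⟨hmj, y, hy, hcon⟩ hj)

lemma accCount_eq_three
    (hacc : ∀ k : Fin 8, Accessible G P k ↔ (k = 0 ∨ k = 1 ∨ k = 2)) :
    accCount G P = 3 := by
  unfold accCount
  have : (Finset.univ.filter fun i => Accessible G P i) = ({0, 1, 2} : Finset (Fin 8)) := by
    ext i
    simp [hacc i, Finset.mem_insert]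
  rw [this]
  decide

lemma no_four (hmax : MaxAccessible G x s P)
    (hacc : ∀ k : Fin 8, Accessible G P k ↔ (k = 0 ∨ k = 1 ∨ k = 2))
    {P' : Fin 8 → Finset V} (hP' : AEColoring G x s P')
    {i0 i1 i2 i3 : Fin 8}
    (h01 : i0 ≠ i1) (h02 : i0 ≠ i2) (h03 : i0 ≠ i3)
    (h12 : i1 ≠ i2) (h13 : i1 ≠ i3) (h23 : i2 ≠ i3)
    (a0 : Accessible G P' i0) (a1 : Accessible G P' i1)
    (a2 : Accessible G P' i2) (a3 : Accessible G P' i3) : False := by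
  have hsub : ({i0, i1, i2, i3} : Finset (Fin 8)) ⊆
      (Finset.univ.filter fun i => Accessible G P' i) := by
    intro t ht
    simp only [Finset.mem_insert, Finset.mem_singleton] at ht
    rcases ht with rfl | rfl | rfl | rfl <;> simp [Finset.mem_filter, a0, a1, a2, a3]
  have hcard4 : ({i0, i1, i2, i3} : Finset (Fin 8)).card = 4 := by
    rw [Finset.card_insert_of_notMem (by simp [h01, h02, h03]),
      Finset.card_insert_of_notMem (by simp [h12, h13]),
      Finset.card_insert_of_notMem (by simp [h23]), Finset.card_singleton]
  have h4 : 4 ≤ accCount G P' := by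
    unfold accCount
    calc 4 = ({i0, i1, i2, i3} : Finset (Fin 8)).card := hcard4.symm
    _ ≤ _ := Finset.card_le_card hsub
  have := hmax P' hP'
  rw [accCount_eq_three hacc] at this
  omega

lemma exists_no_nbr_small
    (hacc : ∀ k : Fin 8, Accessible G P k ↔ (k = 0 ∨ k = 1 ∨ k = 2))
    {a b : Fin 8} (ha : a = 1 ∨ a = 2) (hb : b = 1 ∨ b = 2) (hab : a ≠ b)
    (hterm : Terminal G P a) :
    ∃ w ∈ P b, ∀ z ∈ P 0, ¬ G.Adj w z := by
  have hbacc : Accessible G P b := (hacc b).mpr (by tauto)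
  have hnb : ¬ Blocks G P a b := hterm.2 b hbacc
  rw [Blocks] at hnb
  push_neg at hnb
  have hR := hnb hab
  rcases Relation.ReflTransGen.cases_head hR with hb0 | ⟨c, ⟨harc, _, hca⟩, hrest⟩
  · exfalso; rcases hb with rfl | rfl <;> simp at hb0
  · have hcacc : Accessible G P c :=
      by
        have key : ∀ p q, Relation.ReflTransGen (fun p q => Arc G P p q ∧ p ≠ a ∧ q ≠ a) p q →
            Relation.ReflTransGen (Arc G P) p q := by
          intro p q hpq
          induction hpq with
          | refl => exact Relation.ReflTransGen.refl
          | tail _ h ih => exact ih.tail h.1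
        exact key _ _ hrest
    have hc : c = 0 ∨ c = 1 ∨ c = 2 := (hacc c).mp hcacc
    have hbc : b ≠ c := harc.1
    have hc0 : c = 0 := by
      rcases ha with rfl | rfl <;> rcases hb with rfl | rfl <;>
        first | exact absurd rfl hab | (rcases hc with rfl | rfl | rfl <;> simp_all)
    subst hc0
    obtain ⟨_, w, hw, hwno⟩ := harc
    exact ⟨w, hw, hwno⟩


lemma moveA (hs : 1 ≤ s) (hP : AEColoring G x s P) {a : Fin 8} (ha : a ≠ 0)
    {v : V} (hv : v ∈ P a) (hno : ∀ z ∈ P 0, ¬ G.Adj v z) :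
    AEColoring G x s
      (fun i => if i = 0 then (P a).erase v else if i = a then insert v (P 0) else P i) := by
  obtain ⟨hdisj, hcov, hind, hc0, hcs⟩ := hP
  have hvm : ∀ m, m ≠ a → v ∉ P m := fun m hm h =>
    Finset.disjoint_left.mp (hdisj a m (fun h' => hm h'.symm)) hv h
  have hv0 : v ∉ P 0 := hvm 0 (fun h => ha h.symm)
  refine ⟨?_, ?_, ?_, ?_, ?_⟩
  · intro i j hij
    dsimp only
    by_cases hi0 : i = 0
    · subst hi0
      rw [if_pos rfl, if_neg (Ne.symm hij)]
      by_cases hja : j = a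
      · rw [if_pos hja, Finset.disjoint_insert_right]
        exact ⟨Finset.notMem_erase _ _,
          Finset.disjoint_of_subset_left (Finset.erase_subset _ _) (hdisj a 0 ha)⟩
      · rw [if_neg hja]
        exact Finset.disjoint_of_subset_left (Finset.erase_subset _ _)
          (hdisj a j (fun h => hja h.symm))
    · rw [if_neg hi0]
      by_cases hj0 : j = 0
      · subst hj0
        rw [if_pos rfl]
        by_cases hia : i = a
        · rw [if_pos hia, Finset.disjoint_insert_left]
          exact ⟨Finset.notMem_erase _ _,
            Finset.disjoint_of_subset_right (Finset.erase_subset _ _) (hdisj 0 a (Ne.symm ha))⟩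
        · rw [if_neg hia]
          exact Finset.disjoint_of_subset_right (Finset.erase_subset _ _)
            (hdisj i a (fun h => hia h))
      · rw [if_neg hj0]
        by_cases hia : i = a
        · have hja : ¬ j = a := fun h => hij (hia.trans h.symm)
          rw [if_pos hia, if_neg hja, Finset.disjoint_insert_left]
          exact ⟨hvm j hja, hdisj 0 j (Ne.symm hj0)⟩
        · rw [if_neg hia]
          by_cases hja : j = a
          · rw [if_pos hja, Finset.disjoint_insert_right]
            exact ⟨hvm i hia, hdisj i 0 hi0⟩
          · rw [if_neg hja]
            exact hdisj i j hij
  · intro z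
    constructor
    · rintro ⟨i, hi⟩
      dsimp only at hi
      split_ifs at hi with h1 h2
      · exact (hcov z).mp ⟨a, Finset.mem_of_mem_erase hi⟩
      · rcases Finset.mem_insert.mp hi with rfl | hz
        · exact (hcov z).mp ⟨a, hv⟩
        · exact (hcov z).mp ⟨0, hz⟩
      · exact (hcov z).mp ⟨i, hi⟩
    · intro hz
      obtain ⟨i, hi⟩ := (hcov z).mpr hz
      by_cases hzv : z = v
      · subst hzv
        refine ⟨a, ?_⟩
        dsimp only
        rw [if_neg ha, if_pos rfl]
        exact Finset.mem_insert_self _ _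
      · by_cases hi0 : i = 0
        · subst hi0
          refine ⟨a, ?_⟩
          dsimp only
          rw [if_neg ha, if_pos rfl]
          exact Finset.mem_insert_of_mem hi
        · by_cases hia : i = a
          · refine ⟨0, ?_⟩
            dsimp only
            rw [if_pos rfl]
            exact Finset.mem_erase.mpr ⟨hzv, hia ▸ hi⟩
          · refine ⟨i, ?_⟩
            dsimp only
            rw [if_neg hi0, if_neg hia]
            exact hi
  · intro i p hp q hq
    dsimp only at hp hq
    split_ifs at hp hq with h1 h2
    · exact hind a p (Finset.mem_of_mem_erase hp) q (Finset.mem_of_mem_erase hq)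
    · rcases Finset.mem_insert.mp hp with hp' | hp' <;>
        rcases Finset.mem_insert.mp hq with hq' | hq'
      · subst hp'; subst hq'; exact G.loopless.irrefl _
      · subst hp'; exact hno q hq'
      · subst hq'; exact fun hA => hno p hp' hA.symm
      · exact hind 0 p hp' q hq'
    · exact hind i p hp q hq
  · show (if (0 : Fin 8) = 0 then (P a).erase v else
        if (0 : Fin 8) = a then insert v (P 0) else P 0).card = s - 1
    rw [if_pos rfl, Finset.card_erase_of_mem hv, hcs a ha]
  · intro i hi
    dsimp only
    rw [if_neg hi]
    by_cases hia : i = a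
    · rw [if_pos hia, Finset.card_insert_of_notMem hv0, hc0]
      omega
    · rw [if_neg hia]
      exact hcs i hi

lemma moveB (hs : 1 ≤ s) (hP : AEColoring G x s P) {a b : Fin 8}
    (ha : a ≠ 0) (hb : b ≠ 0) (hab : a ≠ b)
    {v w : V} (hv : v ∈ P a) (hw : w ∈ P b)
    (hvb : ∀ z ∈ P b, ¬ G.Adj v z) (hw0 : ∀ z ∈ P 0, ¬ G.Adj w z) :
    AEColoring G x s
      (fun i => if i = 0 then (P a).erase v else if i = a then insert v ((P b).erase w)
        else if i = b then insert w (P 0) else P i) := by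
  obtain ⟨hdisj, hcov, hind, hc0, hcs⟩ := hP
  have hvm : ∀ m, m ≠ a → v ∉ P m := fun m hm h =>
    Finset.disjoint_left.mp (hdisj a m (fun h' => hm h'.symm)) hv h
  have hwm : ∀ m, m ≠ b → w ∉ P m := fun m hm h =>
    Finset.disjoint_left.mp (hdisj b m (fun h' => hm h'.symm)) hw h
  have hv0 : v ∉ P 0 := hvm 0 (fun h => ha h.symm)
  have hw0' : w ∉ P 0 := hwm 0 (fun h => hb h.symm)
  have hvw : v ≠ w := fun h => hvm b (Ne.symm hab) (h ▸ hw)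
  have c0a : Disjoint ((P a).erase v) (insert v ((P b).erase w)) := by
    rw [Finset.disjoint_insert_right]
    exact ⟨Finset.notMem_erase _ _, Finset.disjoint_of_subset_left (Finset.erase_subset _ _)
      (Finset.disjoint_of_subset_right (Finset.erase_subset _ _) (hdisj a b hab))⟩
  have c0b : Disjoint ((P a).erase v) (insert w (P 0)) := by
    rw [Finset.disjoint_insert_right]
    exact ⟨fun h => hwm a hab (Finset.mem_of_mem_erase h),
      Finset.disjoint_of_subset_left (Finset.erase_subset _ _) (hdisj a 0 ha)⟩
  have c0o : ∀ m, m ≠ a → Disjoint ((P a).erase v) (P m) := fun m hm =>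
    Finset.disjoint_of_subset_left (Finset.erase_subset _ _) (hdisj a m (fun h => hm h.symm))
  have cab : Disjoint (insert v ((P b).erase w)) (insert w (P 0)) := by
    rw [Finset.disjoint_insert_left, Finset.mem_insert, Finset.disjoint_insert_right]
    exact ⟨fun h => h.elim hvw hv0, Finset.notMem_erase _ _,
      Finset.disjoint_of_subset_left (Finset.erase_subset _ _) (hdisj b 0 hb)⟩
  have cao : ∀ m, m ≠ a → m ≠ b → Disjoint (insert v ((P b).erase w)) (P m) := by
    intro m hma hmb
    rw [Finset.disjoint_insert_left]
    exact ⟨hvm m hma, Finset.disjoint_of_subset_left (Finset.erase_subset _ _)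
      (hdisj b m (fun h => hmb h.symm))⟩
  have cbo : ∀ m, m ≠ 0 → m ≠ b → Disjoint (insert w (P 0)) (P m) := by
    intro m hm0 hmb
    rw [Finset.disjoint_insert_left]
    exact ⟨hwm m hmb, hdisj 0 m (fun h => hm0 h.symm)⟩
  refine ⟨?_, ?_, ?_, ?_, ?_⟩
  · intro i j hij
    dsimp only
    by_cases hi0 : i = 0
    · subst hi0
      rw [if_pos rfl, if_neg (Ne.symm hij)]
      by_cases hja : j = a
      · rw [if_pos hja]; exact c0a
      · rw [if_neg hja]
        by_cases hjb : j = b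
        · rw [if_pos hjb]; exact c0b
        · rw [if_neg hjb]; exact c0o j hja
    · rw [if_neg hi0]
      by_cases hia : i = a
      · rw [if_pos hia]
        by_cases hj0 : j = 0
        · subst hj0; rw [if_pos rfl]; exact c0a.symm
        · rw [if_neg hj0]
          have hja : ¬ j = a := fun h => hij (hia.trans h.symm)
          rw [if_neg hja]
          by_cases hjb : j = b
          · rw [if_pos hjb]; exact cab
          · rw [if_neg hjb]; exact cao j hja hjb
      · rw [if_neg hia]
        by_cases hib : i = b
        · rw [if_pos hib]
          by_cases hj0 : j = 0
          · subst hj0; rw [if_pos rfl]; exact c0b.symm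
          · rw [if_neg hj0]
            by_cases hja : j = a
            · rw [if_pos hja]; exact cab.symm
            · rw [if_neg hja]
              have hjb : ¬ j = b := fun h => hij (hib.trans h.symm)
              rw [if_neg hjb]; exact cbo j hj0 hjb
        · rw [if_neg hib]
          by_cases hj0 : j = 0
          · subst hj0; rw [if_pos rfl]; exact (c0o i hia).symm
          · rw [if_neg hj0]
            by_cases hja : j = a
            · rw [if_pos hja]; exact (cao i hia hib).symm
            · rw [if_neg hja]
              by_cases hjb : j = b
              · rw [if_pos hjb]; exact (cbo i hi0 hib).symm
              · rw [if_neg hjb]; exact hdisj i j hij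
  · intro z
    constructor
    · rintro ⟨i, hi⟩
      dsimp only at hi
      split_ifs at hi with h1 h2 h3
      · exact (hcov z).mp ⟨a, Finset.mem_of_mem_erase hi⟩
      · rcases Finset.mem_insert.mp hi with hz | hz
        · exact hz ▸ (hcov v).mp ⟨a, hv⟩
        · exact (hcov z).mp ⟨b, Finset.mem_of_mem_erase hz⟩
      · rcases Finset.mem_insert.mp hi with hz | hz
        · exact hz ▸ (hcov w).mp ⟨b, hw⟩
        · exact (hcov z).mp ⟨0, hz⟩
      · exact (hcov z).mp ⟨i, hi⟩
    · intro hz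
      obtain ⟨i, hi⟩ := (hcov z).mpr hz
      by_cases hzv : z = v
      · refine ⟨a, ?_⟩
        dsimp only
        rw [if_neg ha, if_pos rfl]
        exact hzv ▸ Finset.mem_insert_self _ _
      · by_cases hzw : z = w
        · refine ⟨b, ?_⟩
          dsimp only
          rw [if_neg hb, if_neg (fun h => hab h.symm), if_pos rfl]
          exact hzw ▸ Finset.mem_insert_self _ _
        · by_cases hi0 : i = 0
          · refine ⟨b, ?_⟩
            dsimp only
            rw [if_neg hb, if_neg (fun h => hab h.symm), if_pos rfl]
            exact Finset.mem_insert_of_mem (hi0 ▸ hi)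
          · by_cases hia : i = a
            · refine ⟨0, ?_⟩
              dsimp only
              rw [if_pos rfl]
              exact Finset.mem_erase.mpr ⟨hzv, hia ▸ hi⟩
            · by_cases hib : i = b
              · refine ⟨a, ?_⟩
                dsimp only
                rw [if_neg ha, if_pos rfl]
                exact Finset.mem_insert_of_mem (Finset.mem_erase.mpr ⟨hzw, hib ▸ hi⟩)
              · refine ⟨i, ?_⟩
                dsimp only
                rw [if_neg hi0, if_neg hia, if_neg hib]
                exact hi
  · intro i p hp q hq
    dsimp only at hp hq
    split_ifs at hp hq with h1 h2 h3
    · exact hind a p (Finset.mem_of_mem_erase hp) q (Finset.mem_of_mem_erase hq)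
    · rcases Finset.mem_insert.mp hp with hp' | hp' <;>
        rcases Finset.mem_insert.mp hq with hq' | hq'
      · subst hp'; subst hq'; exact G.loopless.irrefl _
      · subst hp'; exact hvb q (Finset.mem_of_mem_erase hq')
      · subst hq'; exact fun hA => hvb p (Finset.mem_of_mem_erase hp') hA.symm
      · exact hind b p (Finset.mem_of_mem_erase hp') q (Finset.mem_of_mem_erase hq')
    · rcases Finset.mem_insert.mp hp with hp' | hp' <;>
        rcases Finset.mem_insert.mp hq with hq' | hq'
      · subst hp'; subst hq'; exact G.loopless.irrefl _
      · subst hp'; exact hw0 q hq'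
      · subst hq'; exact fun hA => hw0 p hp' hA.symm
      · exact hind 0 p hp' q hq'
    · exact hind i p hp q hq
  · show (if (0 : Fin 8) = 0 then (P a).erase v else _).card = s - 1
    rw [if_pos rfl, Finset.card_erase_of_mem hv, hcs a ha]
  · intro i hi
    dsimp only
    rw [if_neg hi]
    by_cases hia : i = a
    · rw [if_pos hia, Finset.card_insert_of_notMem
        (fun h => hvm b (Ne.symm hab) (Finset.mem_of_mem_erase h)),
        Finset.card_erase_of_mem hw, hcs b hb]
      omega
    · rw [if_neg hia]
      by_cases hib : i = b
      · rw [if_pos hib, Finset.card_insert_of_notMem hw0', hc0]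
        omega
      · rw [if_neg hib]
        exact hcs i hi

lemma count_contra (hs : 1 ≤ s) (hbip : PlanarBipBound G) (hP : AEColoring G x s P)
    {k : Fin 8} (hk0 : k ≠ 0) (hk1 : k ≠ 1) (hk2 : k ≠ 2)
    (key : ∀ m : Fin 8, m ≠ 0 → m ≠ 1 → m ≠ 2 → m ≠ k → ∀ y ∈ P m,
      (∃ z ∈ P 0, G.Adj y z) ∧ (∃ z ∈ P 1, G.Adj y z) ∧
      (∃ z ∈ P 2, G.Adj y z) ∧ (∃ z ∈ P k, G.Adj y z)) : False := by
  obtain ⟨hdisj, hcov, hind, hc0, hcs⟩ := hP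
  set I : Finset (Fin 8) := {0, 1, 2, k} with hI
  set J : Finset (Fin 8) := Finset.univ \ I with hJdef
  set X : Finset V := P 0 ∪ P 1 ∪ P 2 ∪ P k with hX
  set Y : Finset V := J.biUnion P with hY
  have hJ : ∀ m ∈ J, m ≠ 0 ∧ m ≠ 1 ∧ m ≠ 2 ∧ m ≠ k := by
    intro m hm
    rw [hJdef, Finset.mem_sdiff, hI] at hm
    simp only [Finset.mem_insert, Finset.mem_singleton] at hm
    tauto
  have hXY : Disjoint X Y := by
    rw [Finset.disjoint_left]
    intro z hzX hzY
    rw [hY, Finset.mem_biUnion] at hzY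
    obtain ⟨m, hm, hzm⟩ := hzY
    obtain ⟨h0, h1, h2, hk'⟩ := hJ m hm
    rw [hX] at hzX
    simp only [Finset.mem_union] at hzX
    rcases hzX with ((h | h) | h) | h
    · exact Finset.disjoint_left.mp (hdisj 0 m (Ne.symm h0)) h hzm
    · exact Finset.disjoint_left.mp (hdisj 1 m (Ne.symm h1)) h hzm
    · exact Finset.disjoint_left.mp (hdisj 2 m (Ne.symm h2)) h hzm
    · exact Finset.disjoint_left.mp (hdisj k m (Ne.symm hk')) h hzm
  have hJcard : J.card = 4 := by
    have hIc : I.card = 4 := by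
      rw [hI]
      rw [Finset.card_insert_of_notMem (by
        simp only [Finset.mem_insert, Finset.mem_singleton]
        push_neg
        exact ⟨by decide, by decide, fun h => hk0 h.symm⟩)]
      rw [Finset.card_insert_of_notMem (by
        simp only [Finset.mem_insert, Finset.mem_singleton]
        push_neg
        exact ⟨by decide, fun h => hk1 h.symm⟩)]
      rw [Finset.card_insert_of_notMem (by
        simp only [Finset.mem_singleton]
        exact fun h => hk2 h.symm)]
      rw [Finset.card_singleton]
    rw [hJdef, Finset.card_sdiff_of_subset (Finset.subset_univ _), Finset.card_univ, Fintype.card_fin,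
      hIc]
  have hYcard : Y.card = 4 * s := by
    rw [hY, Finset.card_biUnion (fun i _ j _ hij => hdisj i j hij)]
    calc ∑ m ∈ J, (P m).card = ∑ m ∈ J, s :=
          Finset.sum_congr rfl (fun m hm => hcs m (hJ m hm).1)
    _ = 4 * s := by rw [Finset.sum_const, smul_eq_mul, hJcard]
  have hlow : 4 * Y.card ≤ edgesBetween G X Y := by
    set F : Finset (Sym2 V) :=
      Y.biUnion (fun y => (X.filter (fun z => G.Adj y z)).image (fun z => s(y, z))) with hF
    have hsub : F ⊆ G.edgeFinset.filter (fun e => ∃ u ∈ X, ∃ w ∈ Y, e = s(u, w)) := by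
      intro e he
      rw [hF, Finset.mem_biUnion] at he
      obtain ⟨y, hy, he⟩ := he
      rw [Finset.mem_image] at he
      obtain ⟨z, hz, rfl⟩ := he
      rw [Finset.mem_filter] at hz
      rw [Finset.mem_filter]
      exact ⟨SimpleGraph.mem_edgeFinset.mpr ((G.mem_edgeSet).mpr hz.2),
        z, hz.1, y, hy, Sym2.eq_swap⟩
    have hcardF : F.card = ∑ y ∈ Y, (X.filter (fun z => G.Adj y z)).card := by
      rw [hF, Finset.card_biUnion]
      · refine Finset.sum_congr rfl fun y hy => Finset.card_image_of_injOn ?_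
        intro z1 _ z2 _ hz
        rcases Sym2.eq_iff.mp hz with ⟨_, h⟩ | ⟨h1, h2⟩
        · exact h
        · exact h2.trans h1
      · intro y1 hy1 y2 hy2 hne
        rw [Function.onFun, Finset.disjoint_left]
        intro e he1 he2
        simp only [Finset.mem_image, Finset.mem_filter] at he1 he2
        obtain ⟨z1, ⟨hz1X, _⟩, rfl⟩ := he1
        obtain ⟨z2, ⟨hz2X, _⟩, heq⟩ := he2
        rcases Sym2.eq_iff.mp heq with ⟨h1, _⟩ | ⟨h1, h2⟩
        · exact hne (h1.symm)
        · exact Finset.disjoint_left.mp hXY hz1X (h1 ▸ hy2)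
    have hper : ∀ y ∈ Y, 4 ≤ (X.filter (fun z => G.Adj y z)).card := by
      intro y hy
      rw [hY, Finset.mem_biUnion] at hy
      obtain ⟨m, hmJ, hym⟩ := hy
      obtain ⟨h0, h1, h2, hk'⟩ := hJ m hmJ
      obtain ⟨⟨z0, hz0, ha0⟩, ⟨z1, hz1, ha1⟩, ⟨z2, hz2, ha2⟩, ⟨z3, hz3, ha3⟩⟩ :=
        key m h0 h1 h2 hk' y hym
      have hTsub : ({z0, z1, z2, z3} : Finset V) ⊆ X.filter (fun z => G.Adj y z) := by
        intro t ht
        simp only [Finset.mem_insert, Finset.mem_singleton] at ht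
        rw [Finset.mem_filter, hX]
        simp only [Finset.mem_union]
        rcases ht with rfl | rfl | rfl | rfl
        · exact ⟨Or.inl (Or.inl (Or.inl hz0)), ha0⟩
        · exact ⟨Or.inl (Or.inl (Or.inr hz1)), ha1⟩
        · exact ⟨Or.inl (Or.inr hz2), ha2⟩
        · exact ⟨Or.inr hz3, ha3⟩
      have d01 : z0 ≠ z1 := fun h => Finset.disjoint_left.mp (hdisj 0 1 (by decide)) hz0 (h ▸ hz1)
      have d02 : z0 ≠ z2 := fun h => Finset.disjoint_left.mp (hdisj 0 2 (by decide)) hz0 (h ▸ hz2)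
      have d03 : z0 ≠ z3 := fun h => Finset.disjoint_left.mp (hdisj 0 k (Ne.symm hk0)) hz0 (h ▸ hz3)
      have d12 : z1 ≠ z2 := fun h => Finset.disjoint_left.mp (hdisj 1 2 (by decide)) hz1 (h ▸ hz2)
      have d13 : z1 ≠ z3 := fun h => Finset.disjoint_left.mp (hdisj 1 k (Ne.symm hk1)) hz1 (h ▸ hz3)
      have d23 : z2 ≠ z3 := fun h => Finset.disjoint_left.mp (hdisj 2 k (Ne.symm hk2)) hz2 (h ▸ hz3)
      have hTcard : ({z0, z1, z2, z3} : Finset V).card = 4 := by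
        rw [Finset.card_insert_of_notMem (by simp [d01, d02, d03]),
          Finset.card_insert_of_notMem (by simp [d12, d13]),
          Finset.card_insert_of_notMem (by simp [d23]), Finset.card_singleton]
      calc 4 = ({z0, z1, z2, z3} : Finset V).card := hTcard.symm
      _ ≤ _ := Finset.card_le_card hTsub
    calc 4 * Y.card = ∑ _y ∈ Y, 4 := by rw [Finset.sum_const, smul_eq_mul, mul_comm]
    _ ≤ ∑ y ∈ Y, (X.filter (fun z => G.Adj y z)).card := Finset.sum_le_sum hper
    _ = F.card := hcardF.symm
    _ ≤ _ := Finset.card_le_card hsub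
  have hXc : X.card ≤ (P 0 ∪ P 1 ∪ P 2).card + (P k).card := Finset.card_union_le _ _
  have hXc2 : (P 0 ∪ P 1 ∪ P 2).card ≤ (P 0 ∪ P 1).card + (P 2).card := Finset.card_union_le _ _
  have hXc3 : (P 0 ∪ P 1).card ≤ (P 0).card + (P 1).card := Finset.card_union_le _ _
  have e1 : (P 1).card = s := hcs 1 (by decide)
  have e2 : (P 2).card = s := hcs 2 (by decide)
  have ek : (P k).card = s := hcs k hk0
  have hup := hbip X Y hXY (by omega)
  omega

lemma half (hs : 1 ≤ s) (hbip : PlanarBipBound G) (hP : AEColoring G x s P)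
    (hmax : MaxAccessible G x s P)
    (hacc : ∀ k : Fin 8, Accessible G P k ↔ (k = 0 ∨ k = 1 ∨ k = 2))
    {a b : Fin 8} (ha : a = 1 ∨ a = 2) (hb : b = 1 ∨ b = 2) (hab : a ≠ b)
    (hterm : Terminal G P a) :
    ∀ v ∈ P a, (∃ u : V, SoloNbr G P a v u) →
      (∃ w ∈ P 0, G.Adj v w) ∧ (∃ w ∈ P b, G.Adj v w) := by
  intro v hv hu
  obtain ⟨u, ⟨k, hkacc, huk⟩, hadj, hsolo⟩ := hu
  have hk : ¬(k = 0 ∨ k = 1 ∨ k = 2) := fun h => hkacc ((hacc k).mpr h)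
  push_neg at hk
  obtain ⟨hk0, hk1, hk2⟩ := hk
  have ha0 : a ≠ 0 := by rcases ha with rfl | rfl <;> decide
  have hb0 : b ≠ 0 := by rcases hb with rfl | rfl <;> decide
  have hka : k ≠ a := by rcases ha with rfl | rfl <;> assumption
  have hkb : k ≠ b := by rcases hb with rfl | rfl <;> assumption
  constructor
  · -- v has a neighbor in P 0
    by_contra hno
    push_neg at hno
    have hP' := moveA hs hP ha0 hv hno
    set P' : Fin 8 → Finset V := fun i =>
      if i = 0 then (P a).erase v else if i = a then insert v (P 0) else P i with hP'def
    have e0 : P' 0 = (P a).erase v := by simp [hP'def]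
    have ea : P' a = insert v (P 0) := by simp [hP'def, ha0]
    have em : ∀ m : Fin 8, m ≠ 0 → m ≠ a → P' m = P m := by
      intro m h0' ha'
      simp [hP'def, h0', ha']
    have acc0 : Accessible G P' 0 := Relation.ReflTransGen.refl
    have acca : Accessible G P' a := by
      refine Relation.ReflTransGen.single ⟨ha0, v, ?_, ?_⟩
      · rw [ea]; exact Finset.mem_insert_self _ _
      · rw [e0]
        intro z hz
        exact hP.2.2.1 a v hv z (Finset.mem_of_mem_erase hz)
    have acck : Accessible G P' k := by
      refine Relation.ReflTransGen.single ⟨hk0, u, ?_, ?_⟩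
      · rw [em k hk0 hka]; exact huk
      · rw [e0]
        intro z hz hAdj
        exact (Finset.mem_erase.mp hz).1 (hsolo z (Finset.mem_of_mem_erase hz) hAdj)
    refine count_contra hs hbip hP hk0 hk1 hk2 ?_
    intro m h0 h1 h2 hmk y hym
    have hma : m ≠ a := by rcases ha with rfl | rfl <;> assumption
    have hmaccP' : ¬ Accessible G P' m := fun hAm =>
      no_four hmax hacc hP' (Ne.symm ha0) (Ne.symm hk0) (Ne.symm h0)
        (Ne.symm hka) (Ne.symm hma) (Ne.symm hmk) acc0 acca acck hAm
    have hmaccP : ¬ Accessible G P m := fun h =>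
      ((hacc m).mp h).elim h0 (fun h' => h'.elim h1 h2)
    refine ⟨nbr_of_not_accessible hmaccP ((hacc 0).mpr (Or.inl rfl)) y hym,
      nbr_of_not_accessible hmaccP ((hacc 1).mpr (Or.inr (Or.inl rfl))) y hym,
      nbr_of_not_accessible hmaccP ((hacc 2).mpr (Or.inr (Or.inr rfl))) y hym, ?_⟩
    have hk' := nbr_of_not_accessible hmaccP' acck y (by rw [em m h0 hma]; exact hym)
    rw [em k hk0 hka] at hk'
    exact hk'
  · -- v has a neighbor in P b
    by_contra hno
    push_neg at hno
    obtain ⟨w, hwb, hw0⟩ := exists_no_nbr_small hacc ha hb hab hterm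
    have hP'' := moveB hs hP ha0 hb0 hab hv hwb hno hw0
    set P'' : Fin 8 → Finset V := fun i =>
      if i = 0 then (P a).erase v else if i = a then insert v ((P b).erase w)
        else if i = b then insert w (P 0) else P i with hPd
    have e0 : P'' 0 = (P a).erase v := by simp [hPd]
    have ea : P'' a = insert v ((P b).erase w) := by simp [hPd, ha0]
    have hba : ¬ b = a := fun h => hab h.symm
    have eb : P'' b = insert w (P 0) := by
      simp [hPd, hb0, hba]
    have em : ∀ m : Fin 8, m ≠ 0 → m ≠ a → m ≠ b → P'' m = P m := by
      intro m h0' ha' hb'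
      simp [hPd, h0', ha', hb']
    have acc0 : Accessible G P'' 0 := Relation.ReflTransGen.refl
    have acca : Accessible G P'' a := by
      refine Relation.ReflTransGen.single ⟨ha0, v, ?_, ?_⟩
      · rw [ea]; exact Finset.mem_insert_self _ _
      · rw [e0]
        intro z hz
        exact hP.2.2.1 a v hv z (Finset.mem_of_mem_erase hz)
    have accb : Accessible G P'' b := by
      refine Relation.ReflTransGen.head (b := a) ⟨fun h => hab h.symm, w, ?_, ?_⟩ acca
      · rw [eb]; exact Finset.mem_insert_self _ _
      · rw [ea]
        intro z hz
        rcases Finset.mem_insert.mp hz with rfl | hz'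
        · exact fun hA => hno w hwb hA.symm
        · exact hP.2.2.1 b w hwb z (Finset.mem_of_mem_erase hz')
    have acck : Accessible G P'' k := by
      refine Relation.ReflTransGen.single ⟨hk0, u, ?_, ?_⟩
      · rw [em k hk0 hka hkb]; exact huk
      · rw [e0]
        intro z hz hAdj
        exact (Finset.mem_erase.mp hz).1 (hsolo z (Finset.mem_of_mem_erase hz) hAdj)
    exact no_four hmax hacc hP'' (Ne.symm ha0) (Ne.symm hb0) (Ne.symm hk0)
      hab (Ne.symm hka) (Ne.symm hkb) acc0 acca accb acck

end Aux


/-- **Lemma 4.3.** Let `G` be a graph on `8s` vertices satisfying the planar bipartite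
edge bound, and let `P` be an almost equitable coloring of `G − x` maximizing the
number of accessible classes, whose accessible classes are exactly `P 0`, `P 1`, `P 2`
with both `P 1` and `P 2` terminal.  Then every vertex of `P 1` (resp. `P 2`) with a
solo neighbor in a non-accessible class has a neighbor in `P 0` and a neighbor in
`P 2` (resp. `P 1`). -/
theorem solo_vertex_neighbors_three_accessible (V : Type*) [Fintype V]
    (G : SimpleGraph V) (x : V) (s : ℕ) (hs : 1 ≤ s)
    (hcard : Fintype.card V = 8 * s) (hbip : PlanarBipBound G)
    (P : Fin 8 → Finset V) (hP : AEColoring G x s P)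
    (hmax : MaxAccessible G x s P)
    (hacc : ∀ k : Fin 8, Accessible G P k ↔ (k = 0 ∨ k = 1 ∨ k = 2))
    (hterm1 : Terminal G P 1) (hterm2 : Terminal G P 2) :
    (∀ v ∈ P 1, (∃ u : V, SoloNbr G P 1 v u) →
      (∃ w ∈ P 0, G.Adj v w) ∧ (∃ w ∈ P 2, G.Adj v w)) ∧
    (∀ v ∈ P 2, (∃ u : V, SoloNbr G P 2 v u) →
      (∃ w ∈ P 0, G.Adj v w) ∧ (∃ w ∈ P 1, G.Adj v w)) := by
  exact ⟨half hs hbip hP hmax hacc (Or.inl rfl) (Or.inr rfl) (by decide) hterm1,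
    half hs hbip hP hmax hacc (Or.inr rfl) (Or.inl rfl) (by decide) hterm2⟩

end Equitable
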